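/- Let Y be a finite-rank subgroup of K^×. Then Y is strong (in K^×, with respect to G) if and only if for every finite tuple g₁, …, g_k of elements of G one has δ(Y·⟨g₁, …, g_k⟩) ≥ δ(Y), where Y·⟨g₁, …, g_k⟩ denotes the subgroup of K^× generated by Y and g₁, …, g_k. (Strongness can be checked on green points.) -/

import Mathlib

noncomputable section

namespace GreenPoints

variable {K : Type*} [Field K] [CharZero K]

/-- The rank of a (multiplicative) subgroup of `Kˣ`: the ℤ-module rank of the
underlying abelian group, i.e. the dimension over ℚ of `S ⊗ ℚ`. -/
def grpRank (S : Subgroup Kˣ) : Cardinal := Module.rank ℤ (Additive S)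

/-- A subgroup of `Kˣ` has finite rank. -/
def FiniteRank (S : Subgroup Kˣ) : Prop := grpRank S < Cardinal.aleph0

/-- The transcendence degree over ℚ of the subfield of `K` generated by a subset `s` of `K`:
the supremum of the cardinalities of subsets of `s` that are algebraically
independent over ℚ. -/
def tdSet (s : Set K) : Cardinal :=
  ⨆ t : {t : Set K // t ⊆ s ∧ AlgebraicIndependent ℚ ((↑) : t → K)}, Cardinal.mk t.1

/-- The transcendence degree over ℚ of the subfield of `K` generated by a subgroup of `Kˣ`. -/
def td (S : Subgroup Kˣ) : Cardinal := tdSet (Units.val '' (S : Set Kˣ))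

/-- The predimension `δ(S) = 2·td(S) − rk(S ∩ G)` (with respect to the subgroup `G`
of green points). -/
def delta (G S : Subgroup Kˣ) : ℤ :=
  2 * ((td S).toNat : ℤ) - ((grpRank (S ⊓ G)).toNat : ℤ)

/-- `Y` is strong in `T` (with respect to `G`): `δ(W) ≥ δ(Y)` for every finite-rank
subgroup `W` with `Y ⊆ W ⊆ T`. -/
def StrongIn (G Y T : Subgroup Kˣ) : Prop :=
  ∀ W : Subgroup Kˣ, FiniteRank W → Y ≤ W → W ≤ T → delta G Y ≤ delta G W

/-- `Y` is strong: strong in `Kˣ`. -/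
def Strong (G Y : Subgroup Kˣ) : Prop := StrongIn G Y ⊤

/-- A subgroup `S` of `Kˣ` is root-closed: `x ∈ S` whenever `x^n ∈ S` for some `n ≥ 1`. -/
def RootClosed (S : Subgroup Kˣ) : Prop :=
  ∀ (x : Kˣ) (n : ℕ), 1 ≤ n → x ^ n ∈ S → x ∈ S

/-- The subfield of `K` generated by a subgroup of `Kˣ`. -/
def fieldOf (S : Subgroup Kˣ) : Subfield K := Subfield.closure (Units.val '' (S : Set Kˣ))

def toSubmodule (S : Subgroup Kˣ) : Submodule ℤ (Additive Kˣ) :=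
  AddSubgroup.toIntSubmodule (Subgroup.toAddSubgroup S)

lemma mem_toSubmodule {S : Subgroup Kˣ} {x : Kˣ} :
    Additive.ofMul x ∈ toSubmodule S ↔ x ∈ S := Iff.rfl

lemma toSubmodule_mono {S T : Subgroup Kˣ} (h : S ≤ T) : toSubmodule S ≤ toSubmodule T := by
  intro x hx
  exact mem_toSubmodule.2 (h (mem_toSubmodule.1 hx))

lemma toSubmodule_sup (S T : Subgroup Kˣ) :
    toSubmodule (S ⊔ T) = toSubmodule S ⊔ toSubmodule T := by
  unfold toSubmodule
  rw [Subgroup.toAddSubgroup.map_sup]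
  exact OrderIso.map_sup (α := AddSubgroup (Additive Kˣ)) (β := Submodule ℤ (Additive Kˣ))
    AddSubgroup.toIntSubmodule _ _

lemma mem_toAddSubgroup {G' : Type*} [Group G'] {S : Subgroup G'} {x : Additive G'} :
    x ∈ Subgroup.toAddSubgroup S ↔ Additive.toMul x ∈ S := Iff.rfl

lemma toSubmodule_closure (s : Set Kˣ) :
    toSubmodule (Subgroup.closure s) = Submodule.span ℤ (Additive.ofMul '' s) := by
  have h1 : Subgroup.toAddSubgroup (Subgroup.closure s)
      = AddSubgroup.closure (Additive.ofMul '' s) := by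
    apply le_antisymm
    · intro x hx
      have hx' : Additive.toMul x ∈ Subgroup.closure s := hx
      have : Additive.ofMul (Additive.toMul x) ∈ AddSubgroup.closure (Additive.ofMul '' s) := by
        refine Subgroup.closure_induction
          (fun y hy => AddSubgroup.subset_closure (Set.mem_image_of_mem _ hy))
          (AddSubgroup.zero_mem _)
          (fun y z _ _ hy hz => AddSubgroup.add_mem _ hy hz)
          (fun y _ hy => AddSubgroup.neg_mem _ hy) hx'
      exact this
    · refine (AddSubgroup.closure_le _).2 ?_
      rintro _ ⟨x, hx, rfl⟩
      exact mem_toAddSubgroup.2 (Subgroup.subset_closure hx)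
  unfold toSubmodule
  rw [h1, ← Submodule.span_int_eq_addSubgroupClosure,
    Submodule.toAddSubgroup_toIntSubmodule]

def subAddEquiv (S : Subgroup Kˣ) : Additive ↥S ≃+ ↥(toSubmodule S) where
  toFun x := ⟨Additive.ofMul ((Additive.toMul x : ↥S) : Kˣ), (Additive.toMul x).2⟩
  invFun x := Additive.ofMul (⟨Additive.toMul (x : Additive Kˣ), x.2⟩ : ↥S)
  left_inv _ := rfl
  right_inv _ := rfl
  map_add' _ _ := rfl

lemma grpRank_eq (S : Subgroup Kˣ) : grpRank S = Module.rank ℤ ↥(toSubmodule S) :=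
  (subAddEquiv S).toIntLinearEquiv.rank_eq


lemma grpRank_mono {S T : Subgroup Kˣ} (h : S ≤ T) : grpRank S ≤ grpRank T := by
  rw [grpRank_eq, grpRank_eq]
  exact Submodule.rank_mono (toSubmodule_mono h)

lemma rank_sup_le {M : Type*} [AddCommGroup M] (p q : Submodule ℤ M) :
    Module.rank ℤ ↥(p ⊔ q) ≤ Module.rank ℤ ↥p + Module.rank ℤ ↥q := by
  rw [← rank_quotient_add_rank_of_isDomain (Submodule.comap (p ⊔ q).subtype q)]
  refine add_le_add ?_ ?_
  · rw [← (LinearMap.quotientInfEquivSupQuotient p q).rank_eq]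
    exact (Submodule.mkQ _).rank_le_of_surjective Quot.mk_surjective
  · exact (Submodule.comapSubtypeEquivOfLe le_sup_right).rank_eq.le

lemma grpRank_sup_lt {S T : Subgroup Kˣ} (hS : grpRank S < Cardinal.aleph0)
    (hT : grpRank T < Cardinal.aleph0) : grpRank (S ⊔ T) < Cardinal.aleph0 := by
  rw [grpRank_eq] at *
  rw [toSubmodule_sup]
  exact lt_of_le_of_lt (rank_sup_le _ _) (Cardinal.add_lt_aleph0 hS hT)

lemma grpRank_closure_lt {k : ℕ} (g : Fin k → Kˣ) :
    grpRank (Subgroup.closure (Set.range g)) < Cardinal.aleph0 := by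
  rw [grpRank_eq, toSubmodule_closure]
  exact lt_of_le_of_lt (rank_span_le _) (((Set.finite_range g).image _).lt_aleph0)


instance tdSetNonempty (s : Set K) :
    Nonempty {t : Set K // t ⊆ s ∧ AlgebraicIndependent ℚ ((↑) : t → K)} :=
  ⟨⟨∅, Set.empty_subset _, algebraicIndependent_empty⟩⟩

lemma tdSet_le {s : Set K} {c : Cardinal}
    (h : ∀ t : Set K, t ⊆ s → AlgebraicIndependent ℚ ((↑) : t → K) → Cardinal.mk t ≤ c) :
    tdSet s ≤ c :=
  ciSup_le' fun u => h u.1 u.2.1 u.2.2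

lemma tdSet_mono {s t : Set K} (h : s ⊆ t) : tdSet s ≤ tdSet t := by
  refine tdSet_le fun u hu1 hu2 => ?_
  exact le_ciSup_of_le (Cardinal.bddAbove_range _) ⟨u, hu1.trans h, hu2⟩ le_rfl

lemma li_of_algInd {t : Set K} (u : t → Kˣ) (huv : ∀ i : t, ((u i : Kˣ) : K) = (i : K))
    (h : AlgebraicIndependent ℚ ((↑) : t → K)) :
    LinearIndependent ℤ (fun i : t => Additive.ofMul (u i)) := by
  rw [linearIndependent_iff]
  intro l hl
  set d : t →₀ ℕ := l.mapRange Int.toNat Int.toNat_zero with hd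
  set e' : t →₀ ℕ := l.mapRange (fun n => (-n).toNat) (by simp) with he
  have h1 : ∏ i ∈ l.support, u i ^ (l i) = 1 := by
    have h0 := congrArg Additive.toMul hl
    rw [Finsupp.linearCombination_apply, Finsupp.sum] at h0
    simpa [toMul_sum, toMul_zsmul] using h0
  have hterm : ∀ i ∈ l.support, u i ^ (l i) = u i ^ (d i : ℤ) * (u i ^ (e' i : ℤ))⁻¹ := by
    intro i _
    rw [← zpow_neg, ← zpow_add]
    congr 1
    simp only [hd, he, Finsupp.mapRange_apply]
    omega
  rw [Finset.prod_congr rfl hterm, Finset.prod_mul_distrib, Finset.prod_inv_distrib,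
    mul_inv_eq_one] at h1
  -- push to K
  have hcast : ∀ (m : t →₀ ℕ), ((∏ i ∈ l.support, u i ^ (m i : ℤ) : Kˣ) : K)
      = ∏ i ∈ l.support, (i : K) ^ (m i) := by
    intro m
    simp only [zpow_natCast]
    push_cast
    exact Finset.prod_congr rfl fun i _ => by rw [huv]
  have h2 : ∏ i ∈ l.support, (i : K) ^ (d i) = ∏ i ∈ l.support, (i : K) ^ (e' i) := by
    rw [← hcast, ← hcast, h1]
  have hda : MvPolynomial.aeval ((↑) : t → K) (MvPolynomial.monomial d (1 : ℚ))
      = MvPolynomial.aeval ((↑) : t → K) (MvPolynomial.monomial e' (1 : ℚ)) := by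
    rw [MvPolynomial.aeval_monomial, MvPolynomial.aeval_monomial, map_one, one_mul, one_mul,
      Finsupp.prod_of_support_subset d Finsupp.support_mapRange _ (fun i _ => pow_zero _),
      Finsupp.prod_of_support_subset e' Finsupp.support_mapRange _ (fun i _ => pow_zero _)]
    exact h2
  have hde : d = e' := by
    classical
    have hP := h hda
    by_contra hne
    have hcoeff := congrArg (MvPolynomial.coeff d) hP
    rw [MvPolynomial.coeff_monomial, MvPolynomial.coeff_monomial, if_pos rfl,
      if_neg (fun hc : e' = d => hne hc.symm)] at hcoeff
    exact one_ne_zero hcoeff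
  ext i
  have hi : d i = e' i := by rw [hde]
  simp only [hd, he, Finsupp.mapRange_apply] at hi
  simp only [Finsupp.coe_zero, Pi.zero_apply]
  omega


lemma td_le_grpRank (S : Subgroup Kˣ) : tdSet (Units.val '' (S : Set Kˣ)) ≤ grpRank S := by
  refine tdSet_le fun t ht hind => ?_
  have hmem : ∀ i : t, ∃ y : Kˣ, y ∈ S ∧ (y : K) = (i : K) := fun i => by
    rcases ht i.2 with ⟨y, hy, hyv⟩
    exact ⟨y, hy, hyv⟩
  choose u huS huv using hmem
  have hli : LinearIndependent ℤ (fun i : t => Additive.ofMul (u i)) := li_of_algInd u huv hind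
  let j : Additive ↥S →+ Additive Kˣ :=
    AddMonoidHom.mk' (fun x => Additive.ofMul ((Additive.toMul x : ↥S) : Kˣ)) (fun a b => rfl)
  have hv : LinearIndependent ℤ (fun i : t => Additive.ofMul (⟨u i, huS i⟩ : ↥S)) := by
    apply LinearIndependent.of_comp j.toIntLinearMap
    exact hli
  simpa [grpRank] using hv.cardinal_le_rank


/-- Strongness can be checked on green points: a finite-rank subgroup `Y` of `Kˣ` is strong
if and only if for every finite tuple `g₁, …, g_k` of elements of `G` one has
`δ(Y·⟨g₁, …, g_k⟩) ≥ δ(Y)`. -/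
theorem strong_iff_green_tuples {K : Type*} [Field K] [CharZero K] (G Y : Subgroup Kˣ)
    (hfr : FiniteRank Y) :
    Strong G Y ↔
      ∀ (k : ℕ) (g : Fin k → Kˣ), (∀ i, g i ∈ G) →
        delta G Y ≤ delta G (Y ⊔ Subgroup.closure (Set.range g)) := by
  constructor
  · intro hS k g hg
    exact hS _ (grpRank_sup_lt hfr (grpRank_closure_lt g)) le_sup_left le_top
  · intro h W hW hYW _
    classical
    obtain ⟨s, hs_card, hs_ind⟩ :=
      exists_set_linearIndependent_of_isDomain ℤ ↥(toSubmodule (W ⊓ G))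
    have hWG : grpRank (W ⊓ G) < Cardinal.aleph0 :=
      lt_of_le_of_lt (grpRank_mono inf_le_left) hW
    have hWG' : Module.rank ℤ ↥(toSubmodule (W ⊓ G)) < Cardinal.aleph0 := by
      rwa [← grpRank_eq]
    have hsfin : s.Finite := by
      rw [← Cardinal.lt_aleph0_iff_set_finite, hs_card]
      exact hWG'
    haveI := hsfin.fintype
    set n := Fintype.card s with hn
    set e := (Fintype.equivFin s).symm with he
    set g : Fin n → Kˣ :=
      fun i => Additive.toMul (((e i : s) : ↥(toSubmodule (W ⊓ G))) : Additive Kˣ) with hgdef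
    have hgWG : ∀ i, g i ∈ W ⊓ G := fun i => mem_toSubmodule.1 (e i).1.2
    have key := h n g (fun i => (hgWG i).2)
    set V := Y ⊔ Subgroup.closure (Set.range g) with hV
    have hVW : V ≤ W := by
      refine sup_le hYW ((Subgroup.closure_le W).2 ?_)
      rintro _ ⟨i, rfl⟩
      exact (hgWG i).1
    have hsV : ∀ x : s, ((x : ↥(toSubmodule (W ⊓ G))) : Additive Kˣ) ∈ toSubmodule (V ⊓ G) := by
      intro x
      refine mem_toSubmodule.2 ⟨?_, (mem_toSubmodule.1 x.1.2).2⟩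
      have hx : g ((Fintype.equivFin s) x) = Additive.toMul (x.1 : Additive Kˣ) := by
        simp [hgdef, he]
      have hmem : Additive.toMul (x.1 : Additive Kˣ) ∈ Subgroup.closure (Set.range g) := by
        rw [← hx]
        exact Subgroup.subset_closure ⟨_, rfl⟩
      exact (le_sup_right : Subgroup.closure (Set.range g) ≤ V) hmem
    let w : s → ↥(toSubmodule (V ⊓ G)) := fun x => ⟨x.1.1, hsV x⟩
    have hw : LinearIndependent ℤ w := by
      apply LinearIndependent.of_comp (toSubmodule (V ⊓ G)).subtype
      have h2 := hs_ind.map' (toSubmodule (W ⊓ G)).subtype (Submodule.ker_subtype _)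
      exact h2
    have hrWV : grpRank (W ⊓ G) ≤ grpRank (V ⊓ G) := by
      calc grpRank (W ⊓ G) = Cardinal.mk s := by rw [grpRank_eq, ← hs_card]
      _ ≤ Module.rank ℤ ↥(toSubmodule (V ⊓ G)) := hw.cardinal_le_rank
      _ = grpRank (V ⊓ G) := (grpRank_eq _).symm
    have hrVW : grpRank (V ⊓ G) ≤ grpRank (W ⊓ G) := grpRank_mono (inf_le_inf_right _ hVW)
    have htdW : td W < Cardinal.aleph0 := lt_of_le_of_lt (td_le_grpRank W) hW
    have htd : (td V).toNat ≤ (td W).toNat :=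
      Cardinal.toNat_le_toNat (tdSet_mono (Set.image_mono  (SetLike.coe_subset_coe.2 hVW)))
        htdW
    have hrk : (grpRank (V ⊓ G)).toNat = (grpRank (W ⊓ G)).toNat := by
      rw [le_antisymm hrVW hrWV]
    unfold delta at key ⊢
    omega

end GreenPoints

end
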